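/- In the ring of planar 6-complex numbers R[x]/(x^6 + 1), the modulus d(u) = (\sum_{k=0}^5 x_k^2)^{1/2} of u = x_0 + h x_1 + ... + h^5 x_5 satisfies d(u u') \le \sqrt{3} d(u) d(u') for all u, u'. -/

import Mathlib

noncomputable def planar6 : Type :=
  AdjoinRoot ((Polynomial.X : Polynomial ℝ) ^ 6 + 1)

noncomputable instance : CommRing planar6 := AdjoinRoot.instCommRing _

noncomputable instance : Algebra ℝ planar6 := AdjoinRoot.instAlgebra _

noncomputable def h6 : planar6 := AdjoinRoot.root _



open Polynomial in
lemma p6monic : ((Polynomial.X : Polynomial ℝ) ^ 6 + 1).Monic := by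
  have : ((Polynomial.X : Polynomial ℝ) ^ 6 + 1) = Polynomial.X ^ 6 + Polynomial.C 1 := by simp
  rw [this]
  exact Polynomial.monic_X_pow_add_C _ (by norm_num)

lemma h6pow : h6 ^ 6 = -1 := by
  have h := AdjoinRoot.eval₂_root ((Polynomial.X : Polynomial ℝ) ^ 6 + 1)
  simp only [Polynomial.eval₂_add, Polynomial.eval₂_pow, Polynomial.eval₂_X,
    Polynomial.eval₂_one] at h
  exact eq_neg_of_add_eq_zero_left h

open Polynomial in
lemma coe_unique (c : Fin 6 → ℝ)
    (hc : ∑ k : Fin 6, algebraMap ℝ planar6 (c k) * h6 ^ (k : ℕ) = 0) :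
    ∀ k, c k = 0 := by
  have hdim : ((X : ℝ[X]) ^ 6 + 1).natDegree = 6 := by
    have : ((X : ℝ[X]) ^ 6 + 1) = X ^ 6 + C 1 := by simp
    rw [this, Polynomial.natDegree_X_pow_add_C]
  set pb := AdjoinRoot.powerBasis' p6monic with hpb
  have li : LinearIndependent ℝ (fun k : Fin 6 => h6 ^ (k : ℕ)) := by
    have := (pb.basis.linearIndependent).comp
      (finCongr hdim.symm) (finCongr hdim.symm).injective
    have e : (pb.basis ∘ (finCongr hdim.symm)) = (fun k : Fin 6 => h6 ^ (k : ℕ)) := by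
      funext k
      simp [pb.basis_eq_pow, h6, planar6, hpb, AdjoinRoot.powerBasis'_gen]
      rfl
    rw [e] at this
    exact this
  have hc' : ∑ k : Fin 6, c k • (fun k : Fin 6 => h6 ^ (k : ℕ)) k = 0 := by
    simpa [Algebra.smul_def] using hc
  exact Fintype.linearIndependent_iffₛ.mp li c 0 (by simpa using hc')

lemma key6 (s a0 a1 a2 a3 a4 a5 b0 b1 b2 b3 b4 b5 : ℝ) (hs : s^2 = 3) :
    (a0 * b0 - a1 * b5 - a2 * b4 - a3 * b3 - a4 * b2 - a5 * b1)^2 + (a0 * b1 + a1 * b0 - a2 * b5 - a3 * b4 - a4 * b3 - a5 * b2)^2 + (a0 * b2 + a1 * b1 + a2 * b0 - a3 * b5 - a4 * b4 - a5 * b3)^2 + (a0 * b3 + a1 * b2 + a2 * b1 + a3 * b0 - a4 * b5 - a5 * b4)^2 + (a0 * b4 + a1 * b3 + a2 * b2 + a3 * b1 + a4 * b0 - a5 * b5)^2 + (a0 * b5 + a1 * b4 + a2 * b3 + a3 * b2 + a4 * b1 + a5 * b0)^2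
      ≤ 3 * ((a0^2 + a1^2 + a2^2 + a3^2 + a4^2 + a5^2) * (b0^2 + b1^2 + b2^2 + b3^2 + b4^2 + b5^2)) := by
  have hid : 3 * ((a0^2 + a1^2 + a2^2 + a3^2 + a4^2 + a5^2) * (b0^2 + b1^2 + b2^2 + b3^2 + b4^2 + b5^2))
      - ((a0 * b0 - a1 * b5 - a2 * b4 - a3 * b3 - a4 * b2 - a5 * b1)^2 + (a0 * b1 + a1 * b0 - a2 * b5 - a3 * b4 - a4 * b3 - a5 * b2)^2 + (a0 * b2 + a1 * b1 + a2 * b0 - a3 * b5 - a4 * b4 - a5 * b3)^2 + (a0 * b3 + a1 * b2 + a2 * b1 + a3 * b0 - a4 * b5 - a5 * b4)^2 + (a0 * b4 + a1 * b3 + a2 * b2 + a3 * b1 + a4 * b0 - a5 * b5)^2 + (a0 * b5 + a1 * b4 + a2 * b3 + a3 * b2 + a4 * b1 + a5 * b0)^2)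
      = (1/3) * (((a0 + (s/2)*a1 + a2/2 - a4/2 - (s/2)*a5)^2 + (a1/2 + (s/2)*a2 + a3 + (s/2)*a4 + a5/2)^2) * ((b0 - b2 + b4)^2 + (b1 - b3 + b5)^2) + ((a0 + (s/2)*a1 + a2/2 - a4/2 - (s/2)*a5)^2 + (a1/2 + (s/2)*a2 + a3 + (s/2)*a4 + a5/2)^2) * ((b0 - (s/2)*b1 + b2/2 - b4/2 + (s/2)*b5)^2 + (b1/2 - (s/2)*b2 + b3 - (s/2)*b4 + b5/2)^2) + ((a0 - a2 + a4)^2 + (a1 - a3 + a5)^2) * ((b0 + (s/2)*b1 + b2/2 - b4/2 - (s/2)*b5)^2 + (b1/2 + (s/2)*b2 + b3 + (s/2)*b4 + b5/2)^2) + ((a0 - a2 + a4)^2 + (a1 - a3 + a5)^2) * ((b0 - (s/2)*b1 + b2/2 - b4/2 + (s/2)*b5)^2 + (b1/2 - (s/2)*b2 + b3 - (s/2)*b4 + b5/2)^2) + ((a0 - (s/2)*a1 + a2/2 - a4/2 + (s/2)*a5)^2 + (a1/2 - (s/2)*a2 + a3 - (s/2)*a4 + a5/2)^2) * ((b0 +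 (s/2)*b1 + b2/2 - b4/2 - (s/2)*b5)^2 + (b1/2 + (s/2)*b2 + b3 + (s/2)*b4 + b5/2)^2) + ((a0 - (s/2)*a1 + a2/2 - a4/2 + (s/2)*a5)^2 + (a1/2 - (s/2)*a2 + a3 - (s/2)*a4 + a5/2)^2) * ((b0 - b2 + b4)^2 + (b1 - b3 + b5)^2)) := by
    linear_combination (- (13/24)*a5^2*b5^2 - (1/24)*a5^2*b5^2*s^2 - (13/24)*a5^2*b4^2 - (1/24)*a5^2*b4^2*s^2 + (1/6)*a5^2*b3*b5 - (1/3)*a5^2*b3^2 - (1/4)*a5^2*b2*b4 - (1/12)*a5^2*b2*b4*s^2 - (13/24)*a5^2*b2^2 - (1/24)*a5^2*b2^2*s^2 + (1/4)*a5^2*b1*b5 + (1/12)*a5^2*b1*b5*s^2 + (1/6)*a5^2*b1*b3 - (13/24)*a5^2*b1^2 - (1/24)*a5^2*b1^2*s^2 - (1/6)*a5^2*b0*b4 + (1/6)*a5^2*b0*b2 - (1/3)*a5^2*b0^2 + (2/3)*a4*a5*b4*b5 + (2/3)*a4*a5*b3*b4 + (2/3)*a4*a5*b2*b3 + (2/3)*a4*a5*b1*b2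 - (2/3)*a4*a5*b0*b5 + (2/3)*a4*a5*b0*b1 - (13/24)*a4^2*b5^2 - (1/24)*a4^2*b5^2*s^2 - (13/24)*a4^2*b4^2 - (1/24)*a4^2*b4^2*s^2 + (1/6)*a4^2*b3*b5 - (1/3)*a4^2*b3^2 - (1/4)*a4^2*b2*b4 - (1/12)*a4^2*b2*b4*s^2 - (13/24)*a4^2*b2^2 - (1/24)*a4^2*b2^2*s^2 + (1/4)*a4^2*b1*b5 + (1/12)*a4^2*b1*b5*s^2 + (1/6)*a4^2*b1*b3 - (13/24)*a4^2*b1^2 - (1/24)*a4^2*b1^2*s^2 - (1/6)*a4^2*b0*b4 + (1/6)*a4^2*b0*b2 - (1/3)*a4^2*b0^2 + (1/6)*a3*a5*b5^2 + (1/6)*a3*a5*b4^2 + (1/3)*a3*a5*b2*b4 + (1/6)*a3*a5*b2^2 - (1/3)*a3*a5*b1*b5 + (1/6)*a3*a5*b1^2 + (2/3)*a3*a4*b4*b5 + (2/3)*a3*a4*b3*b4 + (2/3)*a3*a4*b2*b3 + (2/3)*a3*a4*b1*b2 - (2/3)*a3*a4*b0*b5 + (2/3)*a3*a4*b0*b1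 - (1/3)*a3^2*b5^2 - (1/3)*a3^2*b4^2 - (2/3)*a3^2*b2*b4 - (1/3)*a3^2*b2^2 + (2/3)*a3^2*b1*b5 - (1/3)*a3^2*b1^2 - (1/4)*a2*a4*b5^2 - (1/12)*a2*a4*b5^2*s^2 - (1/4)*a2*a4*b4^2 - (1/12)*a2*a4*b4^2*s^2 + (1/3)*a2*a4*b3*b5 - (2/3)*a2*a4*b3^2 + (7/6)*a2*a4*b2*b4 - (1/6)*a2*a4*b2*b4*s^2 - (1/4)*a2*a4*b2^2 - (1/12)*a2*a4*b2^2*s^2 - (7/6)*a2*a4*b1*b5 + (1/6)*a2*a4*b1*b5*s^2 + (1/3)*a2*a4*b1*b3 - (1/4)*a2*a4*b1^2 - (1/12)*a2*a4*b1^2*s^2 - (1/3)*a2*a4*b0*b4 + (1/3)*a2*a4*b0*b2 - (2/3)*a2*a4*b0^2 + (2/3)*a2*a3*b4*b5 + (2/3)*a2*a3*b3*b4 + (2/3)*a2*a3*b2*b3 + (2/3)*a2*a3*b1*b2 - (2/3)*a2*a3*b0*b5 + (2/3)*a2*a3*b0*b1 - (13/24)*a2^2*b5^2 - (1/24)*a2^2*b5^2*s^2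 - (13/24)*a2^2*b4^2 - (1/24)*a2^2*b4^2*s^2 + (1/6)*a2^2*b3*b5 - (1/3)*a2^2*b3^2 - (1/4)*a2^2*b2*b4 - (1/12)*a2^2*b2*b4*s^2 - (13/24)*a2^2*b2^2 - (1/24)*a2^2*b2^2*s^2 + (1/4)*a2^2*b1*b5 + (1/12)*a2^2*b1*b5*s^2 + (1/6)*a2^2*b1*b3 - (13/24)*a2^2*b1^2 - (1/24)*a2^2*b1^2*s^2 - (1/6)*a2^2*b0*b4 + (1/6)*a2^2*b0*b2 - (1/3)*a2^2*b0^2 + (1/4)*a1*a5*b5^2 + (1/12)*a1*a5*b5^2*s^2 + (1/4)*a1*a5*b4^2 + (1/12)*a1*a5*b4^2*s^2 - (1/3)*a1*a5*b3*b5 + (2/3)*a1*a5*b3^2 - (7/6)*a1*a5*b2*b4 + (1/6)*a1*a5*b2*b4*s^2 + (1/4)*a1*a5*b2^2 + (1/12)*a1*a5*b2^2*s^2 + (7/6)*a1*a5*b1*b5 - (1/6)*a1*a5*b1*b5*s^2 - (1/3)*a1*a5*b1*b3 + (1/4)*a1*a5*b1^2 + (1/12)*a1*a5*b1^2*s^2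 + (1/3)*a1*a5*b0*b4 - (1/3)*a1*a5*b0*b2 + (2/3)*a1*a5*b0^2 + (1/6)*a1*a3*b5^2 + (1/6)*a1*a3*b4^2 + (1/3)*a1*a3*b2*b4 + (1/6)*a1*a3*b2^2 - (1/3)*a1*a3*b1*b5 + (1/6)*a1*a3*b1^2 + (2/3)*a1*a2*b4*b5 + (2/3)*a1*a2*b3*b4 + (2/3)*a1*a2*b2*b3 + (2/3)*a1*a2*b1*b2 - (2/3)*a1*a2*b0*b5 + (2/3)*a1*a2*b0*b1 - (13/24)*a1^2*b5^2 - (1/24)*a1^2*b5^2*s^2 - (13/24)*a1^2*b4^2 - (1/24)*a1^2*b4^2*s^2 + (1/6)*a1^2*b3*b5 - (1/3)*a1^2*b3^2 - (1/4)*a1^2*b2*b4 - (1/12)*a1^2*b2*b4*s^2 - (13/24)*a1^2*b2^2 - (1/24)*a1^2*b2^2*s^2 + (1/4)*a1^2*b1*b5 + (1/12)*a1^2*b1*b5*s^2 + (1/6)*a1^2*b1*b3 - (13/24)*a1^2*b1^2 - (1/24)*a1^2*b1^2*s^2 - (1/6)*a1^2*b0*b4 + (1/6)*a1^2*b0*b2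 - (1/3)*a1^2*b0^2 - (2/3)*a0*a5*b4*b5 - (2/3)*a0*a5*b3*b4 - (2/3)*a0*a5*b2*b3 - (2/3)*a0*a5*b1*b2 + (2/3)*a0*a5*b0*b5 - (2/3)*a0*a5*b0*b1 - (1/6)*a0*a4*b5^2 - (1/6)*a0*a4*b4^2 - (1/3)*a0*a4*b2*b4 - (1/6)*a0*a4*b2^2 + (1/3)*a0*a4*b1*b5 - (1/6)*a0*a4*b1^2 + (1/6)*a0*a2*b5^2 + (1/6)*a0*a2*b4^2 + (1/3)*a0*a2*b2*b4 + (1/6)*a0*a2*b2^2 - (1/3)*a0*a2*b1*b5 + (1/6)*a0*a2*b1^2 + (2/3)*a0*a1*b4*b5 + (2/3)*a0*a1*b3*b4 + (2/3)*a0*a1*b2*b3 + (2/3)*a0*a1*b1*b2 - (2/3)*a0*a1*b0*b5 + (2/3)*a0*a1*b0*b1 - (1/3)*a0^2*b5^2 - (1/3)*a0^2*b4^2 - (2/3)*a0^2*b2*b4 - (1/3)*a0^2*b2^2 + (2/3)*a0^2*b1*b5 - (1/3)*a0^2*b1^2) * hs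
  have hpos : (0:ℝ) ≤ (1/3) * (((a0 + (s/2)*a1 + a2/2 - a4/2 - (s/2)*a5)^2 + (a1/2 + (s/2)*a2 + a3 + (s/2)*a4 + a5/2)^2) * ((b0 - b2 + b4)^2 + (b1 - b3 + b5)^2) + ((a0 + (s/2)*a1 + a2/2 - a4/2 - (s/2)*a5)^2 + (a1/2 + (s/2)*a2 + a3 + (s/2)*a4 + a5/2)^2) * ((b0 - (s/2)*b1 + b2/2 - b4/2 + (s/2)*b5)^2 + (b1/2 - (s/2)*b2 + b3 - (s/2)*b4 + b5/2)^2) + ((a0 - a2 + a4)^2 + (a1 - a3 + a5)^2) * ((b0 + (s/2)*b1 + b2/2 - b4/2 - (s/2)*b5)^2 + (b1/2 + (s/2)*b2 + b3 + (s/2)*b4 + b5/2)^2) + ((a0 - a2 + a4)^2 + (a1 - a3 + a5)^2) * ((b0 - (s/2)*b1 + b2/2 - b4/2 + (s/2)*b5)^2 + (b1/2 - (s/2)*b2 + b3 - (s/2)*b4 + b5/2)^2) + ((a0 - (s/2)*a1 + a2/2 - a4/2 + (s/2)*a5)^2 + (a1/2 - (s/2)*a2 + a3 - (s/2)*a4 +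 a5/2)^2) * ((b0 + (s/2)*b1 + b2/2 - b4/2 - (s/2)*b5)^2 + (b1/2 + (s/2)*b2 + b3 + (s/2)*b4 + b5/2)^2) + ((a0 - (s/2)*a1 + a2/2 - a4/2 + (s/2)*a5)^2 + (a1/2 - (s/2)*a2 + a3 - (s/2)*a4 + a5/2)^2) * ((b0 - b2 + b4)^2 + (b1 - b3 + b5)^2)) := by positivity
  linarith


open Polynomial in
lemma hexp6 (x x' : Fin 6 → ℝ) :
    (∑ k : Fin 6, algebraMap ℝ planar6 (x k) * h6 ^ (k : ℕ))
        * (∑ k : Fin 6, algebraMap ℝ planar6 (x' k) * h6 ^ (k : ℕ))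
      = (algebraMap ℝ planar6) (x 0 * x' 0 - x 1 * x' 5 - x 2 * x' 4 - x 3 * x' 3 - x 4 * x' 2 - x 5 * x' 1) * h6 ^ (0:ℕ) + (algebraMap ℝ planar6) (x 0 * x' 1 + x 1 * x' 0 - x 2 * x' 5 - x 3 * x' 4 - x 4 * x' 3 - x 5 * x' 2) * h6 ^ (1:ℕ) + (algebraMap ℝ planar6) (x 0 * x' 2 + x 1 * x' 1 + x 2 * x' 0 - x 3 * x' 5 - x 4 * x' 4 - x 5 * x' 3) * h6 ^ (2:ℕ) + (algebraMap ℝ planar6) (x 0 * x' 3 + x 1 * x' 2 + x 2 * x' 1 + x 3 * x' 0 - x 4 * x' 5 - x 5 * x' 4) * h6 ^ (3:ℕ) + (algebraMap ℝ planar6) (x 0 * x' 4 + x 1 * x' 3 + x 2 * x' 2 + x 3 * x' 1 + x 4 * x' 0 - x 5 * x' 5) * h6 ^ (4:ℕ) + (algebraMap ℝ planar6) (x 0 * x' 5 + x 1 * x' 4 + x 2 * x' 3 + x 3 * x' 2 + x 4 * x' 1 + x 5 * x' 0) * h6 ^ (5:ℕ) := by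
  simp only [Fin.sum_univ_six, Fin.val_zero, Fin.val_one, Fin.val_two,
    map_add, map_sub, map_mul]
  have h3 : ((3 : Fin 6) : ℕ) = 3 := rfl
  have h4 : ((4 : Fin 6) : ℕ) = 4 := rfl
  have h5 : ((5 : Fin 6) : ℕ) = 5 := rfl
  rw [h3, h4, h5]
  linear_combination (((algebraMap ℝ planar6) (x 1) * (algebraMap ℝ planar6) (x' 5) + (algebraMap ℝ planar6) (x 2) * (algebraMap ℝ planar6) (x' 4) + (algebraMap ℝ planar6) (x 3) * (algebraMap ℝ planar6) (x' 3) + (algebraMap ℝ planar6) (x 4) * (algebraMap ℝ planar6) (x' 2) + (algebraMap ℝ planar6) (x 5) * (algebraMap ℝ planar6) (x' 1)) * h6 ^ (0:ℕ) + ((algebraMap ℝ planar6) (x 2) * (algebraMap ℝ planar6) (x' 5) + (algebraMap ℝ planar6) (x 3) * (algebraMap ℝ planar6) (x' 4) + (algebraMap ℝ planar6) (x 4) * (algebraMap ℝ planar6) (x' 3) + (algebraMap ℝ planar6) (x 5) * (algebraMap ℝ planar6) (x' 2)) * h6 ^ (1:ℕ) + ((algebraMap ℝ planar6) (x 3) *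 (algebraMap ℝ planar6) (x' 5) + (algebraMap ℝ planar6) (x 4) * (algebraMap ℝ planar6) (x' 4) + (algebraMap ℝ planar6) (x 5) * (algebraMap ℝ planar6) (x' 3)) * h6 ^ (2:ℕ) + ((algebraMap ℝ planar6) (x 4) * (algebraMap ℝ planar6) (x' 5) + (algebraMap ℝ planar6) (x 5) * (algebraMap ℝ planar6) (x' 4)) * h6 ^ (3:ℕ) + ((algebraMap ℝ planar6) (x 5) * (algebraMap ℝ planar6) (x' 5)) * h6 ^ (4:ℕ)) * h6pow


lemma coords_eq (c0 c1 c2 c3 c4 c5 : ℝ)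
    (hc : algebraMap ℝ planar6 c0 + algebraMap ℝ planar6 c1 * h6
        + algebraMap ℝ planar6 c2 * h6 ^ 2 + algebraMap ℝ planar6 c3 * h6 ^ 3
        + algebraMap ℝ planar6 c4 * h6 ^ 4 + algebraMap ℝ planar6 c5 * h6 ^ 5 = 0) :
    c0 = 0 ∧ c1 = 0 ∧ c2 = 0 ∧ c3 = 0 ∧ c4 = 0 ∧ c5 = 0 := by
  have h := coe_unique ![c0, c1, c2, c3, c4, c5] (by
    simp only [Fin.sum_univ_six, Fin.val_zero, Fin.val_one, Fin.val_two]
    show algebraMap ℝ planar6 c0 * h6 ^ 0 + algebraMap ℝ planar6 c1 * h6 ^ 1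
        + algebraMap ℝ planar6 c2 * h6 ^ 2 + algebraMap ℝ planar6 c3 * h6 ^ 3
        + algebraMap ℝ planar6 c4 * h6 ^ 4 + algebraMap ℝ planar6 c5 * h6 ^ 5 = 0
    linear_combination hc)
  exact ⟨h 0, h 1, h 2, h 3, h 4, h 5⟩


set_option maxHeartbeats 1000000 in
theorem planar6_modulus_mul_le (x x' z : Fin 6 → ℝ)
    (hz : (∑ k : Fin 6, algebraMap ℝ planar6 (x k) * h6 ^ (k : ℕ))
        * (∑ k : Fin 6, algebraMap ℝ planar6 (x' k) * h6 ^ (k : ℕ))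
        = ∑ k : Fin 6, algebraMap ℝ planar6 (z k) * h6 ^ (k : ℕ)) :
    Real.sqrt (∑ k : Fin 6, z k ^ 2)
      ≤ Real.sqrt 3 * Real.sqrt (∑ k : Fin 6, x k ^ 2)
        * Real.sqrt (∑ k : Fin 6, x' k ^ 2) := by
  have h3 : ((3 : Fin 6) : ℕ) = 3 := rfl
  have h4 : ((4 : Fin 6) : ℕ) = 4 := rfl
  have h5 : ((5 : Fin 6) : ℕ) = 5 := rfl
  have he := hexp6 x x'
  simp only [Fin.sum_univ_six, Fin.val_zero, Fin.val_one, Fin.val_two, h3, h4, h5,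
    map_sub, map_add, map_mul] at he
  simp only [Fin.sum_univ_six, Fin.val_zero, Fin.val_one, Fin.val_two, h3, h4, h5] at hz
  have hc6 : algebraMap ℝ planar6 (z 0 - (x 0 * x' 0 - x 1 * x' 5 - x 2 * x' 4 - x 3 * x' 3 - x 4 * x' 2 - x 5 * x' 1)) + algebraMap ℝ planar6 (z 1 - (x 0 * x' 1 + x 1 * x' 0 - x 2 * x' 5 - x 3 * x' 4 - x 4 * x' 3 - x 5 * x' 2)) * h6 + algebraMap ℝ planar6 (z 2 - (x 0 * x' 2 + x 1 * x' 1 + x 2 * x' 0 - x 3 * x' 5 - x 4 * x' 4 - x 5 * x' 3)) * h6 ^ 2 + algebraMap ℝ planar6 (z 3 - (x 0 * x' 3 + x 1 * x' 2 + x 2 * x' 1 + x 3 * x' 0 - x 4 * x' 5 - x 5 * x' 4)) * h6 ^ 3 + algebraMap ℝ planar6 (z 4 - (x 0 * x' 4 + x 1 * x' 3 + x 2 * x' 2 + x 3 * x' 1 + x 4 * x' 0 - x 5 * x' 5)) * h6 ^ 4 + algebraMap ℝ planar6 (z 5 - (x 0 * x' 5 + x 1 * x' 4 + x 2 * x' 3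 + x 3 * x' 2 + x 4 * x' 1 + x 5 * x' 0)) * h6 ^ 5 = 0 := by
    simp only [map_sub, map_add, map_mul]
    linear_combination he - hz
  obtain ⟨e0, e1, e2, e3, e4, e5⟩ := coords_eq _ _ _ _ _ _ hc6
  have f0 : z 0 = x 0 * x' 0 - x 1 * x' 5 - x 2 * x' 4 - x 3 * x' 3 - x 4 * x' 2 - x 5 * x' 1 := by linarith [e0]
  have f1 : z 1 = x 0 * x' 1 + x 1 * x' 0 - x 2 * x' 5 - x 3 * x' 4 - x 4 * x' 3 - x 5 * x' 2 := by linarith [e1]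
  have f2 : z 2 = x 0 * x' 2 + x 1 * x' 1 + x 2 * x' 0 - x 3 * x' 5 - x 4 * x' 4 - x 5 * x' 3 := by linarith [e2]
  have f3 : z 3 = x 0 * x' 3 + x 1 * x' 2 + x 2 * x' 1 + x 3 * x' 0 - x 4 * x' 5 - x 5 * x' 4 := by linarith [e3]
  have f4 : z 4 = x 0 * x' 4 + x 1 * x' 3 + x 2 * x' 2 + x 3 * x' 1 + x 4 * x' 0 - x 5 * x' 5 := by linarith [e4]
  have f5 : z 5 = x 0 * x' 5 + x 1 * x' 4 + x 2 * x' 3 + x 3 * x' 2 + x 4 * x' 1 + x 5 * x' 0 := by linarith [e5]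
  rw [Fin.sum_univ_six, Fin.sum_univ_six, Fin.sum_univ_six, f0, f1, f2, f3, f4, f5]
  have hs : Real.sqrt 3 ^ 2 = 3 := Real.sq_sqrt (by norm_num)
  have hk := key6 (Real.sqrt 3) (x 0) (x 1) (x 2) (x 3) (x 4) (x 5)
    (x' 0) (x' 1) (x' 2) (x' 3) (x' 4) (x' 5) hs
  have h1 := Real.sqrt_le_sqrt hk
  rw [Real.sqrt_mul (by norm_num : (0:ℝ) ≤ 3),
    Real.sqrt_mul (by positivity), ← mul_assoc] at h1
  exact h1
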